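/- arXiv:2204.01160 — 2 statements merged into one kernel-verified Lean document; each statement's English description precedes it below -/
import Mathlib

section
/- Hyperbolic discounting admits preference reversal while exponential discounting does not: for d(t) = 1/(1 + tγ) with γ > 0, there exist rewards r1 < r2, delays t and k > 0, and a shift τ > 0 such that r1 · d(t) > r2 · d(t+k) but r1 · d(t+τ) < r2 · d(t+τ+k); whereas for d(t) = λ^t with 0 < λ < 1, for all r1, r2 > 0, t, k, τ ≥ 0, the sign of r1 · d(t) − r2 · d(t+k) equals the sign of r1 · d(t+τ) − r2 · d(t+τ+k). -/
/-- hyperbolic discounting admits preference reversal while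
exponential discounting does not. -/
theorem hyperbolic_preference_reversal_exponential_consistent :
    (∀ γ : ℝ, 0 < γ →
      ∃ r₁ r₂ t k τ : ℝ, r₁ < r₂ ∧ 0 ≤ t ∧ 0 < k ∧ 0 < τ ∧
        r₁ * (1 / (1 + t * γ)) > r₂ * (1 / (1 + (t + k) * γ)) ∧
        r₁ * (1 / (1 + (t + τ) * γ)) < r₂ * (1 / (1 + (t + τ + k) * γ))) ∧
    (∀ lam : ℝ, 0 < lam → lam < 1 →
      ∀ r₁ r₂ t k τ : ℝ, 0 < r₁ → 0 < r₂ → 0 ≤ t → 0 ≤ k → 0 ≤ τ →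
        ((r₁ * lam ^ t > r₂ * lam ^ (t + k) ↔
            r₁ * lam ^ (t + τ) > r₂ * lam ^ (t + τ + k)) ∧
         (r₁ * lam ^ t = r₂ * lam ^ (t + k) ↔
            r₁ * lam ^ (t + τ) = r₂ * lam ^ (t + τ + k)))) := by
  constructor
  · intro γ hγ
    have hγ' : γ ≠ 0 := ne_of_gt hγ
    refine ⟨1, 2, 0, 2/γ, 2/γ, by norm_num, le_refl 0, by positivity, by positivity, ?_, ?_⟩
    · have h : (0 + 2/γ) * γ = 2 := by field_simp; ring
      rw [h]; norm_num
    · have h1 : (0 + 2/γ) * γ = 2 := by field_simp; ring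
      have h2 : (0 + 2/γ + 2/γ) * γ = 4 := by field_simp; ring
      rw [h1, h2]; norm_num
  · intro lam hl0 hl1 r₁ r₂ t k τ hr₁ hr₂ ht hk hτ
    have hp : ∀ x : ℝ, 0 < lam ^ x := fun x => Real.rpow_pos_of_pos hl0 x
    have e1 : lam ^ (t + τ) = lam ^ t * lam ^ τ := Real.rpow_add hl0 t τ
    have e2 : lam ^ (t + τ + k) = lam ^ (t + k) * lam ^ τ := by
      rw [show t + τ + k = (t + k) + τ by ring, Real.rpow_add hl0]
    constructor
    · rw [e1, e2, ← mul_assoc, ← mul_assoc]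
      exact (mul_lt_mul_iff_of_pos_right (hp τ)).symm
    · rw [e1, e2, ← mul_assoc, ← mul_assoc]
      exact ⟨fun h => by rw [h], fun h => mul_right_cancel₀ (hp τ).ne' h⟩
end

section
/- If Q*_λ denotes a value function computed with exponential discount factor λ as Q*_λ(s,a) = Σ_{t≥0} λ^t r_t(s,a) for a fixed bounded reward sequence r_t with |r_t| ≤ R, then the hyperbolically discounted value Q*_γ(s,a) = Σ_{t≥0} (1/(1+tγ)) r_t(s,a) equals ∫_0^1 (1/γ) λ^{1/γ−1} Q*_λ(s,a) dλ, and all series and integrals involved converge absolutely. -/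
/-- for a fixed bounded, finite-horizon reward sequence `r`, the
hyperbolically discounted value `∑_t r_t / (1 + tγ)` equals the mixture of
exponentially discounted values `∫_0^1 (1/γ) λ^{1/γ-1} (∑_t λ^t r_t) dλ`, and
all series involved converge (absolutely). -/
theorem hyperbolic_value_eq_integral_of_exponential_values
    (r : ℕ → ℝ) (R γ : ℝ) (hγ : 0 < γ)
    (hbd : ∀ t, |r t| ≤ R) (hfin : ∃ N, ∀ t ≥ N, r t = 0) :
    Summable (fun t : ℕ => r t / (1 + t * γ)) ∧
    (∀ lam ∈ Set.Ioo (0:ℝ) 1, Summable (fun t : ℕ => lam ^ t * r t)) ∧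
    (∑' t : ℕ, r t / (1 + t * γ)) =
      ∫ lam in (0:ℝ)..1, (1 / γ) * lam ^ (1 / γ - 1) * (∑' t : ℕ, lam ^ t * r t) := by
  obtain ⟨N, hN⟩ := hfin
  have hzero : ∀ t ∉ Finset.range N, r t = 0 := fun t ht =>
    hN t (Nat.le_of_not_lt (by simpa using ht))
  have hsum1 : Summable (fun t : ℕ => r t / (1 + t * γ)) := by
    apply summable_of_ne_finset_zero (s := Finset.range N)
    intro t ht
    simp [hzero t ht]
  have hsum2 : ∀ lam : ℝ, Summable (fun t : ℕ => lam ^ t * r t) := by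
    intro lam
    apply summable_of_ne_finset_zero (s := Finset.range N)
    intro t ht
    simp [hzero t ht]
  refine ⟨hsum1, fun lam _ => hsum2 lam, ?_⟩
  have hγ' : γ ≠ 0 := ne_of_gt hγ
  have hinv : (0:ℝ) < 1 / γ := by positivity
  -- a.e. equality of integrands
  have haeq : ∀ t : ℕ, ∀ lam ∈ Set.uIoc (0:ℝ) 1,
      (1 / γ) * lam ^ (1 / γ - 1) * (lam ^ t * r t)
        = (r t / γ) * lam ^ (1 / γ - 1 + t) := by
    intro t lam hlam
    rw [Set.uIoc_of_le (by norm_num : (0:ℝ) ≤ 1)] at hlam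
    have hl : 0 < lam := hlam.1
    rw [← Real.rpow_natCast lam t, Real.rpow_add hl]
    ring
  have hint : ∀ t : ℕ, IntervalIntegrable
      (fun lam : ℝ => (1 / γ) * lam ^ (1 / γ - 1) * (lam ^ t * r t)) MeasureTheory.volume 0 1 := by
    intro t
    have h1 : (-1:ℝ) < 1 / γ - 1 + t := by
      have : (0:ℝ) ≤ (t:ℝ) := Nat.cast_nonneg t
      linarith
    have h2 : IntervalIntegrable (fun lam : ℝ => (r t / γ) * lam ^ (1 / γ - 1 + t))
        MeasureTheory.volume 0 1 :=
      (intervalIntegral.intervalIntegrable_rpow' h1).const_mul _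
    refine h2.congr ?_
    intro lam hlam
    exact (haeq t lam hlam).symm
  have key : ∀ t : ℕ,
      (∫ lam in (0:ℝ)..1, (1 / γ) * lam ^ (1 / γ - 1) * (lam ^ t * r t))
        = r t / (1 + t * γ) := by
    intro t
    have h1 : (-1:ℝ) < 1 / γ - 1 + t := by
      have : (0:ℝ) ≤ (t:ℝ) := Nat.cast_nonneg t
      linarith
    have hpos : (0:ℝ) < 1 / γ + t := by
      have : (0:ℝ) ≤ (t:ℝ) := Nat.cast_nonneg t
      linarith
    have hrw : (∫ lam in (0:ℝ)..1, (1 / γ) * lam ^ (1 / γ - 1) * (lam ^ t * r t))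
        = ∫ lam in (0:ℝ)..1, (r t / γ) * lam ^ (1 / γ - 1 + t) :=
      intervalIntegral.integral_congr_ae (Filter.Eventually.of_forall (fun lam => haeq t lam))
    rw [hrw, intervalIntegral.integral_const_mul, integral_rpow (Or.inl h1)]
    have he : 1 / γ - 1 + t + 1 = 1 / γ + t := by ring
    rw [he]
    rw [Real.one_rpow, Real.zero_rpow (ne_of_gt hpos)]
    have h1tγ : (0:ℝ) < 1 + t * γ := by
      have ht0 : (0:ℝ) ≤ (t:ℝ) := Nat.cast_nonneg t
      nlinarith
    field_simp
    ring
  have hts : ∀ lam : ℝ, (∑' t : ℕ, lam ^ t * r t)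
      = ∑ t ∈ Finset.range N, lam ^ t * r t :=
    fun lam => tsum_eq_sum (fun t ht => by simp [hzero t ht])
  have hts2 : (∑' t : ℕ, r t / (1 + t * γ))
      = ∑ t ∈ Finset.range N, r t / (1 + t * γ) :=
    tsum_eq_sum (fun t ht => by simp [hzero t ht])
  rw [hts2]
  have : (∫ lam in (0:ℝ)..1, (1 / γ) * lam ^ (1 / γ - 1) * (∑' t : ℕ, lam ^ t * r t))
      = ∫ lam in (0:ℝ)..1, ∑ t ∈ Finset.range N,
          (1 / γ) * lam ^ (1 / γ - 1) * (lam ^ t * r t) := by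
    congr 1
    funext lam
    rw [hts lam, Finset.mul_sum]
  rw [this, intervalIntegral.integral_finset_sum (fun t _ => hint t)]
  exact (Finset.sum_congr rfl (fun t _ => (key t).symm))
end
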